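/- There exists τ₀ > 0 such that ψ_τ(l) ≠ 0 for all τ ≥ τ₀, and χ_τ(l)/ψ_τ(l) − τ → 0 as τ → +∞. (Thus the two leading terms of the logarithmic derivative ψ_τ′(l)/ψ_τ(l), namely τ and the constant term 0, do not depend on the integrable potential q, and coincide with those for zero potential.) -/

import Mathlib

open Real MeasureTheory Filter intervalIntegral

private lemma sinh_nonneg' {y : ℝ} (h : 0 ≤ y) : 0 ≤ Real.sinh y := by
  rw [Real.sinh_eq]
  have := Real.exp_le_exp.mpr (neg_le_self h)
  linarith

private lemma sinh_le_half_exp (y : ℝ) : Real.sinh y ≤ Real.exp y / 2 := by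
  rw [Real.sinh_eq]; nlinarith [Real.exp_pos (-y)]

/-- Integrability of `w * |q|` for continuous `w`. -/
private lemma integrable_w_absq (l : ℝ) (q w : ℝ → ℝ)
    (hq : IntegrableOn q (Set.Icc 0 l)) (hw : Continuous w) :
    IntegrableOn (fun t => w t * |q t|) (Set.Icc 0 l) := by
  obtain ⟨C, hC⟩ := isCompact_Icc.exists_bound_of_continuousOn hw.continuousOn
  refine Integrable.mono' ((hq.abs).const_mul C) ?_ ?_
  · exact hw.aestronglyMeasurable.mul hq.abs.1
  · rw [ae_restrict_iff' measurableSet_Icc]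
    filter_upwards with t ht
    have h1 := hC t ht
    have h2 : ‖w t * |q t|‖ = |w t| * |q t| := by rw [Real.norm_eq_abs, abs_mul, abs_abs]
    rw [h2]
    have := abs_nonneg (q t)
    have : |w t| * |q t| ≤ C * |q t| := by
      apply mul_le_mul_of_nonneg_right _ (abs_nonneg _)
      simpa using h1
    linarith

/-- Key integral bound: if the integrand is dominated by `w t * |q t|` on `Ioc 0 x`,
then the interval integral from 0 to x is dominated by `∫_{Icc 0 l} w |q|`. -/
private lemma integral_kernel_bound (l x : ℝ) (q f w : ℝ → ℝ)
    (hq : IntegrableOn q (Set.Icc 0 l)) (hx : x ∈ Set.Icc 0 l)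
    (hw : Continuous w) (hw0 : ∀ t, 0 ≤ w t)
    (hbd : ∀ t ∈ Set.Ioc 0 x, |f t| ≤ w t * |q t|) :
    |∫ t in (0:ℝ)..x, f t| ≤ ∫ t in Set.Icc 0 l, w t * |q t| := by
  have h0x : (0:ℝ) ≤ x := hx.1
  have hxl : x ≤ l := hx.2
  have hqa : IntegrableOn (fun t => w t * |q t|) (Set.Icc 0 l) :=
    integrable_w_absq l q w hq hw
  have hsub : Set.Icc 0 x ⊆ Set.Icc 0 l := Set.Icc_subset_Icc le_rfl hxl
  have hii : IntervalIntegrable (fun t => w t * |q t|) volume 0 x := by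
    apply IntegrableOn.intervalIntegrable
    rw [Set.uIcc_of_le h0x]
    exact hqa.mono_set hsub
  have key := intervalIntegral.norm_integral_le_abs_of_norm_le (f := f)
    (g := fun t => w t * |q t|) (μ := volume) (a := 0) (b := x) ?_ hii
  swap
  · rw [Set.uIoc_of_le h0x, ae_restrict_iff' measurableSet_Ioc]
    filter_upwards with t ht
    rw [Real.norm_eq_abs]
    exact hbd t ht
  rw [Real.norm_eq_abs] at key
  refine key.trans ?_
  have hnn : (0:ℝ) ≤ ∫ t in (0:ℝ)..x, w t * |q t| :=
    intervalIntegral.integral_nonneg h0x (fun u _ => mul_nonneg (hw0 u) (abs_nonneg _))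
  rw [abs_of_nonneg hnn, intervalIntegral.integral_of_le h0x]
  apply setIntegral_mono_set hqa
  · exact Filter.Eventually.of_forall fun t => mul_nonneg (hw0 t) (abs_nonneg _)
  · exact HasSubset.Subset.eventuallyLE ((Set.Ioc_subset_Icc_self).trans hsub)

private lemma psi_le (l : ℝ) (hl : 0 < l) (q : ℝ → ℝ) (hq : IntegrableOn q (Set.Icc 0 l))
    (τ : ℝ) (hτ1 : 1 ≤ τ) (hτQ : 2 * (∫ t in Set.Icc (0:ℝ) l, |q t|) ≤ τ)
    (f : ℝ → ℝ) (hf : ContinuousOn f (Set.Icc 0 l))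
    (heq : ∀ x ∈ Set.Icc 0 l, f x = Real.sinh (τ * x) / τ +
      (1 / τ) * ∫ t in (0:ℝ)..x, Real.sinh (τ * (x - t)) * q t * f t) :
    ∀ x ∈ Set.Icc 0 l, |f x| ≤ Real.exp (τ * x) / τ := by
  have hτ0 : (0:ℝ) < τ := lt_of_lt_of_le one_pos hτ1
  set Q := ∫ t in Set.Icc (0:ℝ) l, |q t| with hQdef
  have hQ0 : 0 ≤ Q := setIntegral_nonneg measurableSet_Icc (fun t _ => abs_nonneg _)
  have hgc : ContinuousOn (fun x => τ * (Real.exp (-(τ*x)) * |f x|)) (Set.Icc 0 l) := by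
    apply continuousOn_const.mul
    exact ((Real.continuous_exp.comp ((continuous_const.mul continuous_id).neg)).continuousOn).mul hf.abs
  obtain ⟨x₀, hx₀, hmax⟩ := isCompact_Icc.exists_isMaxOn (Set.nonempty_Icc.2 hl.le) hgc
  set M := τ * (Real.exp (-(τ*x₀)) * |f x₀|) with hM
  have hM0 : 0 ≤ M := mul_nonneg hτ0.le (mul_nonneg (Real.exp_pos _).le (abs_nonneg _))
  have hfb : ∀ t ∈ Set.Icc 0 l, |f t| ≤ M * Real.exp (τ*t) / τ := by
    intro t ht
    have h1 : τ * (Real.exp (-(τ*t)) * |f t|) ≤ M := hmax ht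
    have h2 : Real.exp (-(τ*t)) * Real.exp (τ*t) = 1 := by rw [← Real.exp_add]; simp
    rw [le_div_iff₀ hτ0]
    have h3 := mul_le_mul_of_nonneg_right h1 (Real.exp_pos (τ*t)).le
    have h4 : τ * (Real.exp (-(τ*t)) * |f t|) * Real.exp (τ*t) = |f t| * τ := by
      calc τ * (Real.exp (-(τ*t)) * |f t|) * Real.exp (τ*t)
          = |f t| * τ * (Real.exp (-(τ*t)) * Real.exp (τ*t)) := by ring
        _ = |f t| * τ := by rw [h2, mul_one]
    linarith
  have hbd : ∀ t ∈ Set.Ioc 0 x₀,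
      |Real.sinh (τ * (x₀ - t)) * q t * f t| ≤ (M * Real.exp (τ*x₀) / (2*τ)) * |q t| := by
    intro t ht
    have htI : t ∈ Set.Icc 0 l := ⟨ht.1.le, ht.2.trans hx₀.2⟩
    have htx : t ≤ x₀ := ht.2
    have hs0 : 0 ≤ Real.sinh (τ * (x₀ - t)) := sinh_nonneg' (by nlinarith)
    have hs1 : Real.sinh (τ * (x₀ - t)) ≤ Real.exp (τ * (x₀ - t)) / 2 := sinh_le_half_exp _
    have hft : |f t| ≤ M * Real.exp (τ*t) / τ := hfb t htI
    have hexp : Real.exp (τ * (x₀ - t)) * Real.exp (τ*t) = Real.exp (τ*x₀) := by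
      rw [← Real.exp_add]; ring_nf
    rw [abs_mul, abs_mul, abs_of_nonneg hs0]
    have step1 : Real.sinh (τ * (x₀ - t)) * |q t| * |f t| ≤
        (Real.exp (τ * (x₀ - t)) / 2) * |q t| * (M * Real.exp (τ*t) / τ) := by
      apply mul_le_mul (mul_le_mul hs1 le_rfl (abs_nonneg _) (by positivity)) hft (abs_nonneg _)
        (by positivity)
    refine step1.trans (le_of_eq ?_)
    rw [← hexp]; field_simp
  have hint := integral_kernel_bound l x₀ q (fun t => Real.sinh (τ * (x₀ - t)) * q t * f t)
      (fun _ => M * Real.exp (τ*x₀) / (2*τ)) hq hx₀ continuous_const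
      (fun t => by positivity) hbd
  have hCQ : ∫ t in Set.Icc (0:ℝ) l, (M * Real.exp (τ*x₀) / (2*τ)) * |q t|
      = (M * Real.exp (τ*x₀) / (2*τ)) * Q := integral_const_mul _ _
  rw [hCQ] at hint
  have habs : |f x₀| ≤ Real.sinh (τ*x₀)/τ + (1/τ) * ((M * Real.exp (τ*x₀)/(2*τ)) * Q) := by
    rw [heq x₀ hx₀]
    refine (abs_add_le _ _).trans ?_
    have h1 : |Real.sinh (τ*x₀)/τ| = Real.sinh (τ*x₀)/τ :=
      abs_of_nonneg (div_nonneg (sinh_nonneg' (by nlinarith [hx₀.1])) hτ0.le)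
    rw [h1, abs_mul, abs_of_nonneg (by positivity : (0:ℝ) ≤ 1/τ)]
    exact add_le_add le_rfl (mul_le_mul_of_nonneg_left hint (by positivity))
  have hsinh : Real.exp (-(τ*x₀)) * Real.sinh (τ*x₀) ≤ 1/2 := by
    have h2 : Real.exp (-(τ*x₀)) * Real.exp (τ*x₀) = 1 := by rw [← Real.exp_add]; simp
    rw [Real.sinh_eq]
    nlinarith [Real.exp_pos (-(τ*x₀)), sq_nonneg (Real.exp (-(τ*x₀)))]
  have hMle : M ≤ 1/2 + M/4 := by
    have e1 : Real.exp (-(τ*x₀)) * Real.exp (τ*x₀) = 1 := by rw [← Real.exp_add]; simp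
    have h3 : M ≤ τ * Real.exp (-(τ*x₀)) *
        (Real.sinh (τ*x₀)/τ + (1/τ)*((M*Real.exp (τ*x₀)/(2*τ))*Q)) := by
      rw [hM]
      have h := mul_le_mul_of_nonneg_left habs
        (mul_nonneg hτ0.le (Real.exp_pos (-(τ*x₀))).le)
      calc τ * (Real.exp (-(τ*x₀)) * |f x₀|) = τ * Real.exp (-(τ*x₀)) * |f x₀| := by ring
      _ ≤ _ := h
    have h4 : τ * Real.exp (-(τ*x₀)) *
        (Real.sinh (τ*x₀)/τ + (1/τ)*((M*Real.exp (τ*x₀)/(2*τ))*Q))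
        = Real.exp (-(τ*x₀)) * Real.sinh (τ*x₀)
          + M*Q/(2*τ) * (Real.exp (-(τ*x₀)) * Real.exp (τ*x₀)) := by
      field_simp
    rw [e1, mul_one] at h4
    have h5 : M*Q/(2*τ) ≤ M/4 := by
      rw [div_le_div_iff₀ (by positivity) (by norm_num)]
      nlinarith
    rw [h4] at h3
    linarith
  have hM1 : M ≤ 1 := by linarith
  intro x hx
  refine (hfb x hx).trans ?_
  apply (div_le_div_iff_of_pos_right hτ0).mpr
  nlinarith [Real.exp_pos (τ*x)]

private lemma psi_lower (l : ℝ) (hl : 0 < l) (q : ℝ → ℝ) (hq : IntegrableOn q (Set.Icc 0 l))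
    (τ : ℝ) (hτ1 : 1 ≤ τ) (hτl : 1 ≤ τ * l)
    (hτQ : 4 * (∫ t in Set.Icc (0:ℝ) l, |q t|) ≤ τ)
    (f : ℝ → ℝ) (hf : ContinuousOn f (Set.Icc 0 l))
    (heq : ∀ x ∈ Set.Icc 0 l, f x = Real.sinh (τ * x) / τ +
      (1 / τ) * ∫ t in (0:ℝ)..x, Real.sinh (τ * (x - t)) * q t * f t) :
    Real.exp (τ * l) / (8 * τ) ≤ f l := by
  have hτ0 : (0:ℝ) < τ := lt_of_lt_of_le one_pos hτ1
  set Q := ∫ t in Set.Icc (0:ℝ) l, |q t| with hQdef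
  have hQ0 : 0 ≤ Q := setIntegral_nonneg measurableSet_Icc (fun t _ => abs_nonneg _)
  have hb := psi_le l hl q hq τ hτ1 (by linarith) f hf heq
  have hlm : l ∈ Set.Icc (0:ℝ) l := ⟨hl.le, le_rfl⟩
  have hbd : ∀ t ∈ Set.Ioc 0 l,
      |Real.sinh (τ * (l - t)) * q t * f t| ≤ (Real.exp (τ*l) / (2*τ)) * |q t| := by
    intro t ht
    have htI : t ∈ Set.Icc 0 l := ⟨ht.1.le, ht.2⟩
    have hs0 : 0 ≤ Real.sinh (τ * (l - t)) := sinh_nonneg' (by nlinarith [ht.2])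
    have hs1 : Real.sinh (τ * (l - t)) ≤ Real.exp (τ * (l - t)) / 2 := sinh_le_half_exp _
    have hft : |f t| ≤ Real.exp (τ*t) / τ := hb t htI
    have hexp : Real.exp (τ * (l - t)) * Real.exp (τ*t) = Real.exp (τ*l) := by
      rw [← Real.exp_add]; ring_nf
    rw [abs_mul, abs_mul, abs_of_nonneg hs0]
    have step1 : Real.sinh (τ * (l - t)) * |q t| * |f t| ≤
        (Real.exp (τ * (l - t)) / 2) * |q t| * (Real.exp (τ*t) / τ) := by
      apply mul_le_mul (mul_le_mul hs1 le_rfl (abs_nonneg _) (by positivity)) hft (abs_nonneg _)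
        (by positivity)
    refine step1.trans (le_of_eq ?_)
    rw [← hexp]; field_simp
  have hint := integral_kernel_bound l l q (fun t => Real.sinh (τ * (l - t)) * q t * f t)
      (fun _ => Real.exp (τ*l) / (2*τ)) hq hlm continuous_const (fun t => by positivity) hbd
  rw [MeasureTheory.integral_const_mul] at hint
  have hfl : τ * f l = Real.sinh (τ*l) + ∫ t in (0:ℝ)..l, Real.sinh (τ * (l - t)) * q t * f t := by
    rw [heq l hlm]; field_simp
  have hsinh : Real.exp (τ*l) / 4 ≤ Real.sinh (τ*l) := by
    have h1 : Real.exp (-(τ*l)) ≤ Real.exp (-1) := Real.exp_le_exp.mpr (by linarith)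
    have h2 : Real.exp (-1) ≤ 1/2 := by
      rw [Real.exp_neg]
      rw [inv_le_comm₀ (Real.exp_pos 1) (by norm_num)]
      have := Real.add_one_le_exp 1
      linarith
    have h3 : (1:ℝ) ≤ Real.exp (τ*l) := Real.one_le_exp (by linarith)
    rw [Real.sinh_eq]
    linarith
  have hR : -(Real.exp (τ*l) / (2*τ) * Q) ≤ ∫ t in (0:ℝ)..l, Real.sinh (τ * (l - t)) * q t * f t := by
    have := neg_abs_le (∫ t in (0:ℝ)..l, Real.sinh (τ * (l - t)) * q t * f t)
    linarith
  have hQsmall : Real.exp (τ*l) / (2*τ) * Q ≤ Real.exp (τ*l) / 8 := by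
    rw [div_mul_eq_mul_div, div_le_div_iff₀ (by positivity) (by norm_num)]
    nlinarith [Real.exp_pos (τ*l)]
  have hkey : Real.exp (τ*l) / 8 ≤ τ * f l := by rw [hfl]; linarith
  rw [div_le_iff₀ (by positivity)]
  nlinarith

private lemma ii_kernel (l : ℝ) (q f k : ℝ → ℝ) (h0l : (0:ℝ) ≤ l)
    (hq : IntegrableOn q (Set.Icc 0 l)) (hf : ContinuousOn f (Set.Icc 0 l))
    (hk : Continuous k) :
    IntervalIntegrable (fun t => k t * q t * f t) volume 0 l := by
  apply IntegrableOn.intervalIntegrable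
  rw [Set.uIcc_of_le h0l]
  obtain ⟨Ck, hCk⟩ := isCompact_Icc.exists_bound_of_continuousOn hk.continuousOn
  obtain ⟨Cf, hCf⟩ := isCompact_Icc.exists_bound_of_continuousOn hf
  refine Integrable.mono' ((hq.abs).const_mul (Ck * Cf)) ?_ ?_
  · exact (hk.aestronglyMeasurable.mul hq.1).mul (hf.aestronglyMeasurable measurableSet_Icc)
  · rw [ae_restrict_iff' measurableSet_Icc]
    filter_upwards with t ht
    have h1 := hCk t ht
    have h2 := hCf t ht
    rw [Real.norm_eq_abs] at h1 h2 ⊢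
    rw [abs_mul, abs_mul]
    have hq0 := abs_nonneg (q t)
    have hk0 := abs_nonneg (k t)
    have hf0 := abs_nonneg (f t)
    calc |k t| * |q t| * |f t| ≤ Ck * |q t| * Cf :=
          mul_le_mul (mul_le_mul h1 le_rfl hq0 (hk0.trans h1)) h2 hf0
            (mul_nonneg (hk0.trans h1) hq0)
      _ = Ck * Cf * |q t| := by ring

private lemma chi_minus (l : ℝ) (hl : 0 < l) (q : ℝ → ℝ) (hq : IntegrableOn q (Set.Icc 0 l))
    (τ : ℝ) (hτ1 : 1 ≤ τ) (hτQ : 2 * (∫ t in Set.Icc (0:ℝ) l, |q t|) ≤ τ)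
    (f : ℝ → ℝ) (hf : ContinuousOn f (Set.Icc 0 l))
    (heq : ∀ x ∈ Set.Icc 0 l, f x = Real.sinh (τ * x) / τ +
      (1 / τ) * ∫ t in (0:ℝ)..x, Real.sinh (τ * (x - t)) * q t * f t) :
    |(Real.cosh (τ * l) + ∫ t in (0:ℝ)..l, Real.cosh (τ * (l - t)) * q t * f t) - τ * f l|
      ≤ Real.exp (-(τ*l)) +
        (Real.exp (τ*l)/τ) * ∫ t in Set.Icc (0:ℝ) l, Real.exp (2*τ*(t-l)) * |q t| := by
  have hτ0 : (0:ℝ) < τ := lt_of_lt_of_le one_pos hτ1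
  have hb := psi_le l hl q hq τ hτ1 hτQ f hf heq
  have hlm : l ∈ Set.Icc (0:ℝ) l := ⟨hl.le, le_rfl⟩
  have hfl : τ * f l = Real.sinh (τ*l) + ∫ t in (0:ℝ)..l, Real.sinh (τ * (l - t)) * q t * f t := by
    rw [heq l hlm]; field_simp
  have hiic : IntervalIntegrable (fun t => Real.cosh (τ * (l - t)) * q t * f t) volume 0 l :=
    ii_kernel l q f _ hl.le hq hf (Real.continuous_cosh.comp (by continuity))
  have hiis : IntervalIntegrable (fun t => Real.sinh (τ * (l - t)) * q t * f t) volume 0 l :=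
    ii_kernel l q f _ hl.le hq hf (Real.continuous_sinh.comp (by continuity))
  have hsplit : (Real.cosh (τ * l) + ∫ t in (0:ℝ)..l, Real.cosh (τ * (l - t)) * q t * f t)
      - τ * f l
      = Real.exp (-(τ*l)) + ∫ t in (0:ℝ)..l, Real.exp (-(τ * (l - t))) * q t * f t := by
    rw [hfl]
    have h1 : (Real.cosh (τ*l) + ∫ t in (0:ℝ)..l, Real.cosh (τ * (l - t)) * q t * f t)
        - (Real.sinh (τ*l) + ∫ t in (0:ℝ)..l, Real.sinh (τ * (l - t)) * q t * f t)
        = (Real.cosh (τ*l) - Real.sinh (τ*l)) +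
          ((∫ t in (0:ℝ)..l, Real.cosh (τ * (l - t)) * q t * f t)
            - ∫ t in (0:ℝ)..l, Real.sinh (τ * (l - t)) * q t * f t) := by ring
    rw [h1, Real.cosh_sub_sinh, ← intervalIntegral.integral_sub hiic hiis]
    congr 1
    apply intervalIntegral.integral_congr
    intro t _
    have h2 : Real.cosh (τ*(l-t)) - Real.sinh (τ*(l-t)) = Real.exp (-(τ*(l-t))) :=
      Real.cosh_sub_sinh _
    simp only
    linear_combination (q t * f t) * h2
  rw [hsplit]
  refine (abs_add_le _ _).trans ?_
  rw [abs_of_nonneg (Real.exp_pos _).le]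
  refine add_le_add le_rfl ?_
  have hbd : ∀ t ∈ Set.Ioc 0 l,
      |Real.exp (-(τ * (l - t))) * q t * f t|
        ≤ (Real.exp (τ*l)/τ * Real.exp (2*τ*(t-l))) * |q t| := by
    intro t ht
    have htI : t ∈ Set.Icc 0 l := ⟨ht.1.le, ht.2⟩
    have hft : |f t| ≤ Real.exp (τ*t) / τ := hb t htI
    have hexp : Real.exp (τ*l) * Real.exp (2*τ*(t-l)) = Real.exp (-(τ * (l - t))) * Real.exp (τ*t) := by
      rw [← Real.exp_add, ← Real.exp_add]; ring_nf
    rw [abs_mul, abs_mul, abs_of_nonneg (Real.exp_pos _).le]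
    have step1 : Real.exp (-(τ * (l - t))) * |q t| * |f t|
        ≤ Real.exp (-(τ * (l - t))) * |q t| * (Real.exp (τ*t) / τ) :=
      mul_le_mul_of_nonneg_left hft (by positivity)
    refine step1.trans (le_of_eq ?_)
    rw [div_mul_eq_mul_div, mul_div_assoc]
    rw [show Real.exp (-(τ * (l - t))) * |q t| * (Real.exp (τ*t) / τ)
        = (Real.exp (-(τ * (l - t))) * Real.exp (τ*t)) * |q t| / τ by ring, ← hexp]
    ring
  have hint := integral_kernel_bound l l q (fun t => Real.exp (-(τ * (l - t))) * q t * f t)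
      (fun t => Real.exp (τ*l)/τ * Real.exp (2*τ*(t-l))) hq hlm
      (continuous_const.mul (Real.continuous_exp.comp (by continuity)))
      (fun t => by positivity) hbd
  refine hint.trans (le_of_eq ?_)
  rw [← MeasureTheory.integral_const_mul]
  congr 1
  funext t
  ring

set_option maxHeartbeats 1000000 in
/-- For large `τ`, `ψ_τ(l) ≠ 0` and the logarithmic derivative
satisfies `χ_τ(l)/ψ_τ(l) = τ + o(1)` as `τ → +∞`; in particular the two leading
terms do not depend on the integrable potential `q`. -/
theorem log_derivative_asymptotics (l : ℝ) (hl : 0 < l) (q : ℝ → ℝ)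
    (hq : IntegrableOn q (Set.Icc 0 l)) (ψ χ : ℝ → ℝ → ℝ)
    (hψcont : ∀ τ > (0:ℝ), ContinuousOn (ψ τ) (Set.Icc 0 l))
    (hψ : ∀ τ > (0:ℝ), ∀ x ∈ Set.Icc 0 l,
      ψ τ x = Real.sinh (τ * x) / τ +
        (1 / τ) * ∫ t in (0:ℝ)..x, Real.sinh (τ * (x - t)) * q t * ψ τ t)
    (hχ : ∀ τ > (0:ℝ), ∀ x ∈ Set.Icc 0 l,
      χ τ x = Real.cosh (τ * x) +
        ∫ t in (0:ℝ)..x, Real.cosh (τ * (x - t)) * q t * ψ τ t) :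
    (∃ τ₀ > (0:ℝ), ∀ τ ≥ τ₀, ψ τ l ≠ 0) ∧
      Tendsto (fun τ : ℝ => χ τ l / ψ τ l - τ) atTop (nhds 0) := by
  set Q := ∫ t in Set.Icc (0:ℝ) l, |q t| with hQdef
  have hQ0 : 0 ≤ Q := setIntegral_nonneg measurableSet_Icc fun t _ => abs_nonneg _
  set τ₀ : ℝ := 1 + 1/l + 4*Q with hτ₀def
  have hτ₀pos : 0 < τ₀ := by positivity
  have hfacts : ∀ τ, τ₀ ≤ τ → 1 ≤ τ ∧ 1 ≤ τ*l ∧ 4*Q ≤ τ ∧ 0 < τ := by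
    intro τ hτ
    have h1l : 0 < 1/l := by positivity
    have h1 : 1 ≤ τ := by rw [hτ₀def] at hτ; linarith
    have h2 : 1 ≤ τ*l := by
      have hll : 1/l ≤ τ := by rw [hτ₀def] at hτ; linarith
      have := (div_le_iff₀ hl).mp hll
      linarith
    exact ⟨h1, h2, by rw [hτ₀def] at hτ; linarith, by linarith⟩
  have hlow : ∀ τ, τ₀ ≤ τ → Real.exp (τ*l)/(8*τ) ≤ ψ τ l := by
    intro τ hτ
    obtain ⟨h1, h2, h4, hp⟩ := hfacts τ hτ
    exact psi_lower l hl q hq τ h1 h2 h4 (ψ τ) (hψcont τ hp) (hψ τ hp)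
  refine ⟨⟨τ₀, hτ₀pos, fun τ hτ => ?_⟩, ?_⟩
  · have hψpos : 0 < ψ τ l := lt_of_lt_of_le (by
      have := (hfacts τ hτ).2.2.2; positivity) (hlow τ hτ)
    exact ne_of_gt hψpos
  set I : ℝ → ℝ := fun τ => ∫ t in Set.Icc (0:ℝ) l, Real.exp (2*τ*(t-l)) * |q t| with hIdef
  have hI0 : ∀ τ, 0 ≤ I τ := fun τ =>
    setIntegral_nonneg measurableSet_Icc fun t _ => by positivity
  have hbound : ∀ τ, τ₀ ≤ τ → |χ τ l / ψ τ l - τ| ≤ 8*τ*Real.exp (-(2*τ*l)) + 8 * I τ := by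
    intro τ hτ
    obtain ⟨h1, h2, h4, hp⟩ := hfacts τ hτ
    have hψl := hlow τ hτ
    have hψpos : 0 < ψ τ l := lt_of_lt_of_le (by positivity) hψl
    have hχeq := hχ τ hp l ⟨hl.le, le_rfl⟩
    have hd := chi_minus l hl q hq τ h1 (by linarith) (ψ τ) (hψcont τ hp) (hψ τ hp)
    rw [← hχeq] at hd
    have hrw : χ τ l / ψ τ l - τ = (χ τ l - τ * ψ τ l) / ψ τ l := by
      field_simp
    rw [hrw, abs_div, abs_of_pos hψpos, div_le_iff₀ hψpos]
    have hfac0 : 0 ≤ 8*τ*Real.exp (-(2*τ*l)) + 8 * I τ := by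
      have := hI0 τ
      positivity
    calc |χ τ l - τ * ψ τ l| ≤ Real.exp (-(τ*l)) + (Real.exp (τ*l)/τ) * I τ := hd
      _ = (8*τ*Real.exp (-(2*τ*l)) + 8 * I τ) * (Real.exp (τ*l)/(8*τ)) := by
          have e1 : Real.exp (-(2*τ*l)) * Real.exp (τ*l) = Real.exp (-(τ*l)) := by
            rw [← Real.exp_add]; ring_nf
          rw [← e1]
          field_simp
      _ ≤ (8*τ*Real.exp (-(2*τ*l)) + 8 * I τ) * ψ τ l :=
          mul_le_mul_of_nonneg_left hψl hfac0
  have ht1 : Tendsto (fun τ : ℝ => 8*τ*Real.exp (-(2*τ*l))) atTop (nhds 0) := by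
    have h1 : Tendsto (fun y : ℝ => y * Real.exp (-y)) atTop (nhds 0) := by
      simpa using Real.tendsto_pow_mul_exp_neg_atTop_nhds_zero 1
    have h2 : Tendsto (fun τ : ℝ => 2*l*τ) atTop atTop :=
      Tendsto.const_mul_atTop (by positivity) tendsto_id
    have h4 := (h1.comp h2).const_mul (4/l)
    rw [mul_zero] at h4
    have heqf : (fun τ:ℝ => 8*τ*Real.exp (-(2*τ*l)))
        = fun τ => (4/l) * ((fun y : ℝ => y * Real.exp (-y)) ((fun τ:ℝ => 2*l*τ) τ)) := by
      funext τ
      simp only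
      rw [show -(2*l*τ) = -(2*τ*l) by ring]
      field_simp
      ring
    rw [heqf]
    exact h4
  have ht2 : Tendsto I atTop (nhds 0) := by
    have key := MeasureTheory.tendsto_integral_filter_of_dominated_convergence
      (μ := volume.restrict (Set.Icc (0:ℝ) l)) (l := atTop)
      (F := fun (τ:ℝ) (t:ℝ) => Real.exp (2*τ*(t-l)) * |q t|) (f := fun _ => (0:ℝ))
      (fun t => |q t|) ?_ ?_ ?_ ?_
    · simpa using key
    · refine Eventually.of_forall fun τ => ?_
      exact ((Real.continuous_exp.comp
        (continuous_const.mul (continuous_id.sub continuous_const))).aestronglyMeasurable).mul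
        hq.abs.1
    · filter_upwards [eventually_ge_atTop (0:ℝ)] with τ hτ'
      rw [ae_restrict_iff' measurableSet_Icc]
      filter_upwards with t ht
      rw [Real.norm_eq_abs, abs_mul, abs_abs, abs_of_nonneg (Real.exp_pos _).le]
      have he1 : Real.exp (2*τ*(t-l)) ≤ 1 := Real.exp_le_one_iff.mpr (by nlinarith [ht.2])
      nlinarith [abs_nonneg (q t)]
    · exact hq.abs
    · have hmem := ae_restrict_mem (μ := volume) measurableSet_Icc (s := Set.Icc (0:ℝ) l)
      have hsing : (volume.restrict (Set.Icc (0:ℝ) l)) {l} = 0 := by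
        rw [Measure.restrict_apply (measurableSet_singleton l)]
        exact measure_mono_null Set.inter_subset_left (measure_singleton l)
      have hne : ∀ᵐ (t:ℝ) ∂(volume.restrict (Set.Icc (0:ℝ) l)), t ≠ l := by
        rw [ae_iff]
        simpa only [not_not, Set.setOf_eq_eq_singleton] using hsing
      filter_upwards [hmem, hne] with t ht htl
      have htlt : t - l < 0 := sub_neg.mpr (lt_of_le_of_ne ht.2 htl)
      have hlin : Tendsto (fun τ:ℝ => τ * (2*(t-l))) atTop atBot :=
        Tendsto.atTop_mul_const_of_neg (by linarith) tendsto_id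
      have hcomp := (Real.tendsto_exp_atBot.comp hlin).mul_const |q t|
      rw [zero_mul] at hcomp
      have heq2 : (fun τ:ℝ => Real.exp (2*τ*(t-l)) * |q t|)
          = fun τ:ℝ => Real.exp ((fun τ:ℝ => τ * (2*(t-l))) τ) * |q t| := by
        funext τ
        simp only
        congr 1
        ring
      rw [heq2]
      exact hcomp
  have hsum : Tendsto (fun τ => 8*τ*Real.exp (-(2*τ*l)) + 8 * I τ) atTop (nhds 0) := by
    have := ht1.add (ht2.const_mul 8)
    simpa using this
  apply squeeze_zero_norm' _ hsum
  filter_upwards [eventually_ge_atTop τ₀] with τ hτ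
  rw [Real.norm_eq_abs]
  exact hbound τ hτ
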